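/- Let k ≥ 1 be an upper bound on the sizes of the members of 𝓑 and |𝓑| = m. Let T ⊆ 𝓑 × 𝓑 be a spanning in-arborescence of the body graph D_𝓑 of minimum total weight with respect to the weights w(B,B') = |B' \ B|. Then |Φ_T|_C ≤ ⌈log₂ k⌉ · OPT_C(𝓑) + max{0, m − k}. -/

import Mathlib

open Finset

variable {V : Type*} [Fintype V] [DecidableEq V]

/-- A pure Horn CNF is a finite set of clauses `(B, v)`: body `B`, head `v`,
with `B` nonempty and `v ∉ B`. -/
def PureHorn (Φ : Finset (Finset V × V)) : Prop :=
  ∀ c ∈ Φ, c.1.Nonempty ∧ c.2 ∉ c.1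

/-- A set `W` is closed under the clauses of `Φ`. -/
def HornClosed (Φ : Finset (Finset V × V)) (W : Set V) : Prop :=
  ∀ c ∈ Φ, ↑c.1 ⊆ W → c.2 ∈ W

/-- Forward-chaining closure `F_Φ(Z)`: the smallest set containing `Z`
that is closed under the clauses of `Φ`. -/
def hornClosure (Φ : Finset (Finset V × V)) (Z : Set V) : Set V :=
  ⋂₀ {W : Set V | Z ⊆ W ∧ HornClosed Φ W}

/-- `Ψ_𝓑 = ⋀_{B ∈ 𝓑} B → (V \ B)`. -/
def keyCNF (𝓑 : Finset (Finset V)) : Finset (Finset V × V) :=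
  𝓑.biUnion fun B => (Finset.univ \ B).image fun v => (B, v)

/-- `Φ` represents the key Horn function `h_𝓑`, i.e. `Φ` is a pure Horn CNF
equivalent to `Ψ_𝓑`. -/
def Represents (𝓑 : Finset (Finset V)) (Φ : Finset (Finset V × V)) : Prop :=
  PureHorn Φ ∧ ∀ Z : Finset V, hornClosure Φ ↑Z = hornClosure (keyCNF 𝓑) ↑Z

/-- (B) number of (distinct) bodies. -/
def sizeB (Φ : Finset (Finset V × V)) : ℕ := (Φ.image Prod.fst).card
/-- (BA) body area `Σ_i |B_i|` over the distinct bodies. -/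
def sizeBA (Φ : Finset (Finset V × V)) : ℕ := ∑ B ∈ Φ.image Prod.fst, B.card
/-- (C) number of clauses `Σ_i |H_i|`. -/
def sizeC (Φ : Finset (Finset V × V)) : ℕ := Φ.card
/-- (TA) total area `Σ_i (|B_i| + |H_i|)`. -/
def sizeTA (Φ : Finset (Finset V × V)) : ℕ := sizeBA Φ + sizeC Φ
/-- (BC) bodies plus clauses `Σ_i (|H_i| + 1)`. -/
def sizeBC (Φ : Finset (Finset V × V)) : ℕ := sizeB Φ + sizeC Φ
/-- (L) number of literals `Σ_i (|B_i| + 1)·|H_i|`. -/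
def sizeL (Φ : Finset (Finset V × V)) : ℕ := ∑ c ∈ Φ, (c.1.card + 1)

/-- `μ` is one of the six size measures. -/
def IsMeasure (μ : Finset (Finset V × V) → ℕ) : Prop :=
  μ = sizeB ∨ μ = sizeBA ∨ μ = sizeTA ∨ μ = sizeC ∨ μ = sizeBC ∨ μ = sizeL

/-- `OPT_μ(𝓑)`: minimum `μ`-size of a CNF representing `h_𝓑`. -/
noncomputable def OPT (μ : Finset (Finset V × V) → ℕ) (𝓑 : Finset (Finset V)) : ℕ :=
  sInf {s : ℕ | ∃ Φ : Finset (Finset V × V), Represents 𝓑 Φ ∧ μ Φ = s}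

/-- `price_μ(S,T)`: minimum `μ`-size of a pure Horn CNF with bodies in `𝓑`
whose forward chaining from `S` reaches all of `T`. -/
noncomputable def price (μ : Finset (Finset V × V) → ℕ) (𝓑 : Finset (Finset V))
    (S T : Finset V) : ℕ :=
  sInf {s : ℕ | ∃ Φ : Finset (Finset V × V),
    PureHorn Φ ∧ (∀ c ∈ Φ, c.1 ∈ 𝓑) ∧ ↑T ⊆ hornClosure Φ ↑S ∧ μ Φ = s}

set_option linter.unusedSectionVars false
set_option linter.unusedVariables false

-- Closure basics
lemma subset_hornClosure (Φ : Finset (Finset V × V)) (Z : Set V) : Z ⊆ hornClosure Φ Z :=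
  fun _ hx => Set.mem_sInter.2 fun _ hW => hW.1 hx

lemma hornClosed_hornClosure (Φ : Finset (Finset V × V)) (Z : Set V) :
    HornClosed Φ (hornClosure Φ Z) := by
  intro c hc hsub
  refine Set.mem_sInter.2 fun W hW => hW.2 c hc (hsub.trans ?_)
  exact Set.sInter_subset_of_mem hW

lemma hornClosure_subset {Φ : Finset (Finset V × V)} {Z W : Set V}
    (hZ : Z ⊆ W) (hW : HornClosed Φ W) : hornClosure Φ Z ⊆ W :=
  Set.sInter_subset_of_mem ⟨hZ, hW⟩

lemma mem_keyCNF {𝓑 : Finset (Finset V)} {c : Finset V × V} :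
    c ∈ keyCNF 𝓑 ↔ ∃ B ∈ 𝓑, c.1 = B ∧ c.2 ∉ B := by
  constructor
  · intro h
    simp only [keyCNF, Finset.mem_biUnion, Finset.mem_image, Finset.mem_sdiff,
      Finset.mem_univ, true_and] at h
    obtain ⟨B, hB, v, hv, rfl⟩ := h
    exact ⟨B, hB, rfl, hv⟩
  · rintro ⟨B, hB, h1, h2⟩
    simp only [keyCNF, Finset.mem_biUnion, Finset.mem_image, Finset.mem_sdiff,
      Finset.mem_univ, true_and]
    exact ⟨B, hB, c.2, by rw [← h1] at h2 ⊢; exact ⟨h2, rfl⟩⟩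

lemma keyCNF_closure_univ {𝓑 : Finset (Finset V)} {B : Finset V} (hB : B ∈ 𝓑) :
    hornClosure (keyCNF 𝓑) ↑B = Set.univ := by
  refine Set.eq_univ_of_forall fun x => ?_
  by_cases hx : x ∈ B
  · exact subset_hornClosure _ _ hx
  · refine hornClosed_hornClosure (keyCNF 𝓑) ↑B (B, x) ?_ (subset_hornClosure _ _)
    exact mem_keyCNF.2 ⟨B, hB, rfl, hx⟩

lemma keyCNF_closure_id {𝓑 : Finset (Finset V)} {Z : Finset V}
    (h : ∀ B ∈ 𝓑, ¬ B ⊆ Z) : hornClosure (keyCNF 𝓑) ↑Z = ↑Z := by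
  refine le_antisymm (hornClosure_subset le_rfl ?_) (subset_hornClosure _ _)
  intro c hc hsub
  obtain ⟨B, hB, h1, _⟩ := mem_keyCNF.1 hc
  rw [h1] at hsub
  exact absurd (by exact_mod_cast hsub) (h B hB)

-- Facts about any representation
lemma rep_closure_univ {𝓑 : Finset (Finset V)} {Φ : Finset (Finset V × V)}
    (hrep : Represents 𝓑 Φ) {B : Finset V} (hB : B ∈ 𝓑) :
    hornClosure Φ ↑B = Set.univ := by
  rw [hrep.2 B, keyCNF_closure_univ hB]

lemma rep_body_mem {𝓑 : Finset (Finset V)} {Φ : Finset (Finset V × V)}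
    (hrep : Represents 𝓑 Φ) {c : Finset V × V} (hc : c ∈ Φ) :
    ∃ B ∈ 𝓑, B ⊆ c.1 := by
  by_contra hcon
  push_neg at hcon
  have h1 : hornClosure Φ ↑c.1 = ↑c.1 := by
    rw [hrep.2 c.1, keyCNF_closure_id hcon]
  have h2 : c.2 ∈ hornClosure Φ ↑c.1 :=
    hornClosed_hornClosure Φ ↑c.1 c hc (subset_hornClosure _ _)
  rw [h1] at h2
  exact (hrep.1 c hc).2 (by exact_mod_cast h2)

/-- Key reach lemma: starting from `S ⊇ B₁` (with `B₁`'s closure being everything),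
as long as no member outside `A` is contained, we can keep firing clauses whose
bodies only contain members in `A`; eventually some member outside `A` is fully
contained, at a cost (in clauses) covering its new elements. -/
lemma reachLemma {𝓑 : Finset (Finset V)} (Φ : Finset (Finset V × V))
    (hmem : ∀ c ∈ Φ, ∃ B ∈ 𝓑, B ⊆ c.1)
    (A : Finset V → Prop) (hA : ∃ B ∈ 𝓑, ¬ A B)
    (B₁ : Finset V) (hcl : hornClosure Φ ↑B₁ = Set.univ) :
    ∀ n (S : Finset V), (Finset.univ \ S).card ≤ n → B₁ ⊆ S →
      ↑S ⊆ hornClosure Φ ↑B₁ →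
    ∃ Bs ∈ 𝓑, ¬ A Bs ∧ ∃ U ⊆ Φ,
      (∀ c ∈ U, ∀ B ∈ 𝓑, B ⊆ c.1 → A B) ∧ (∀ c ∈ U, c.2 ∉ S) ∧
      (Bs \ S).card ≤ U.card := by
  intro n
  induction n with
  | zero =>
    intro S hcard hB₁S hS
    -- S = univ, so the witness of hA is contained in S
    have hSuniv : S = Finset.univ := by
      have : Finset.univ \ S = ∅ := Finset.card_eq_zero.1 (Nat.le_zero.1 hcard)
      have h2 := Finset.sdiff_eq_empty_iff_subset.1 this
      exact le_antisymm (Finset.subset_univ S) h2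
    obtain ⟨Bs, hBs, hnA⟩ := hA
    exact ⟨Bs, hBs, hnA, ∅, Finset.empty_subset _, by simp, by simp,
      by simp [hSuniv]⟩
  | succ n ih =>
    intro S hcard hB₁S hS
    by_cases h1 : ∃ Bs ∈ 𝓑, ¬ A Bs ∧ Bs ⊆ S
    · obtain ⟨Bs, hBs, hnA, hsub⟩ := h1
      refine ⟨Bs, hBs, hnA, ∅, Finset.empty_subset _, by simp, by simp, ?_⟩
      simp [Finset.sdiff_eq_empty_iff_subset.2 hsub]
    · push_neg at h1
      -- S ≠ univ
      have hSne : S ≠ Finset.univ := by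
        rintro rfl
        obtain ⟨Bs, hBs, hnA⟩ := hA
        exact hnA (h1 Bs hBs hnA.elim (Finset.subset_univ _) |>.elim)
      -- S is not Horn-closed
      have hnc : ¬ HornClosed Φ ↑S := by
        intro hc
        have := hornClosure_subset (Finset.coe_subset.2 hB₁S) hc
        rw [hcl] at this
        apply hSne
        refine Finset.eq_univ_iff_forall.2 fun x => ?_
        exact_mod_cast this (Set.mem_univ x)
      simp only [HornClosed, not_forall] at hnc
      obtain ⟨c, hcΦ, hbody, hhead⟩ := hnc
      have hbody' : c.1 ⊆ S := by exact_mod_cast hbody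
      have hhead' : c.2 ∉ S := by exact_mod_cast hhead
      set S' := insert c.2 S with hS'
      have hheadcl : c.2 ∈ hornClosure Φ ↑B₁ :=
        hornClosed_hornClosure Φ ↑B₁ c hcΦ (hbody.trans (by exact_mod_cast hS))
      have hS'cl : ↑S' ⊆ hornClosure Φ ↑B₁ := by
        rw [hS', Finset.coe_insert]
        exact Set.insert_subset hheadcl hS
      have hcard' : (Finset.univ \ S').card ≤ n := by
        have h2 : Finset.univ \ S' = (Finset.univ \ S).erase c.2 := by
          rw [hS', Finset.sdiff_insert]
        have h3 : c.2 ∈ Finset.univ \ S := by simp [hhead']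
        rw [h2, Finset.card_erase_of_mem h3]
        omega
      obtain ⟨Bs, hBs, hnA, U', hU'Φ, hU'mem, hU'head, hU'card⟩ :=
        ih S' hcard' (hB₁S.trans (Finset.subset_insert _ _)) hS'cl
      have hcU' : c ∉ U' := fun h => hU'head c h (Finset.mem_insert_self _ _)
      refine ⟨Bs, hBs, hnA, insert c U', Finset.insert_subset hcΦ hU'Φ, ?_, ?_, ?_⟩
      · intro c' hc' B hB hBc'
        rcases Finset.mem_insert.1 hc' with rfl | hc'
        · by_contra hnAB
          exact h1 B hB hnAB (hBc'.trans hbody')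
        · exact hU'mem c' hc' B hB hBc'
      · intro c' hc'
        rcases Finset.mem_insert.1 hc' with rfl | hc'
        · exact hhead'
        · exact fun h => hU'head c' hc' (Finset.mem_insert_of_mem h)
      · rw [Finset.card_insert_of_notMem hcU']
        have : Bs \ S ⊆ insert c.2 (Bs \ S') := by
          intro x hx
          rcases Finset.mem_sdiff.1 hx with ⟨hx1, hx2⟩
          by_cases hxc : x = c.2
          · exact Finset.mem_insert.2 (Or.inl hxc)
          · exact Finset.mem_insert.2 (Or.inr (Finset.mem_sdiff.2
              ⟨hx1, by simp [hS', hxc, hx2]⟩))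
        calc (Bs \ S).card ≤ (insert c.2 (Bs \ S')).card := Finset.card_le_card this
          _ ≤ (Bs \ S').card + 1 := Finset.card_insert_le _ _
          _ ≤ U'.card + 1 := by omega

/-- `B` reaches `r` by iterating `g`. -/
def RReach (g : Finset V → Finset V) (B r : Finset V) : Prop := ∃ j, g^[j] B = r

/-- Partial in-forest state: roots, parent map `g` fixing the roots,
every member reaching some root. -/
def GoodArb (𝓑 roots : Finset (Finset V)) (g : Finset V → Finset V) : Prop :=
  roots ⊆ 𝓑 ∧ roots.Nonempty ∧ (∀ B ∈ 𝓑, g B ∈ 𝓑) ∧ (∀ r ∈ roots, g r = r) ∧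
    (∀ B ∈ 𝓑, ∃ r ∈ roots, RReach g B r)

def wArb (𝓑 : Finset (Finset V)) (g : Finset V → Finset V) : ℕ :=
  ∑ B ∈ 𝓑, (g B \ B).card

lemma rreach_stab {g : Finset V → Finset V} {B r : Finset V} (hg : g r = r)
    {j j' : ℕ} (hj : g^[j] B = r) (hle : j ≤ j') : g^[j'] B = r := by
  obtain ⟨d, rfl⟩ := Nat.exists_eq_add_of_le hle
  rw [Nat.add_comm, Function.iterate_add_apply, hj, Function.iterate_fixed hg]

lemma rreach_unique {𝓑 roots : Finset (Finset V)} {g : Finset V → Finset V}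
    (h : GoodArb 𝓑 roots g) {B r₁ r₂ : Finset V} (h1 : r₁ ∈ roots) (h2 : r₂ ∈ roots)
    (hr1 : RReach g B r₁) (hr2 : RReach g B r₂) : r₁ = r₂ := by
  obtain ⟨j₁, hj₁⟩ := hr1
  obtain ⟨j₂, hj₂⟩ := hr2
  rcases le_total j₁ j₂ with hle | hle
  · rw [← rreach_stab (h.2.2.2.1 r₁ h1) hj₁ hle, hj₂]
  · rw [← rreach_stab (h.2.2.2.1 r₂ h2) hj₂ hle, hj₁]

lemma iterate_update_eq {g : Finset V → Finset V} {r Bs : Finset V} :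
    ∀ (j : ℕ) (B : Finset V), (∀ i < j, g^[i] B ≠ r) →
      (Function.update g r Bs)^[j] B = g^[j] B := by
  intro j
  induction j with
  | zero => intro B _; rfl
  | succ j ih =>
    intro B h
    have hB : B ≠ r := by simpa using h 0 (Nat.succ_pos j)
    rw [Function.iterate_succ_apply, Function.iterate_succ_apply,
      Function.update_of_ne hB]
    refine ih (g B) fun i hi => ?_
    have := h (i + 1) (by omega)
    rwa [Function.iterate_succ_apply] at this

lemma iterate_update_eq' {g : Finset V → Finset V} {r Bs B : Finset V}
    (h : ¬ RReach g B r) (j : ℕ) : (Function.update g r Bs)^[j] B = g^[j] B :=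
  iterate_update_eq j B fun i _ hir => h ⟨i, hir⟩

lemma rreach_update_of_not {g : Finset V → Finset V} {r Bs B r' : Finset V}
    (h : ¬ RReach g B r) (h' : RReach g B r') :
    RReach (Function.update g r Bs) B r' := by
  obtain ⟨j, hj⟩ := h'
  exact ⟨j, by rw [iterate_update_eq' h j, hj]⟩

lemma rreach_update_through {g : Finset V → Finset V} {r Bs B r₁ : Finset V}
    (hB : RReach g B r) (htarget : RReach (Function.update g r Bs) Bs r₁) :
    RReach (Function.update g r Bs) B r₁ := by
  classical
  have hex : ∃ j, g^[j] B = r := hB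
  let j₀ := Nat.find hex
  have hj₀ : g^[j₀] B = r := Nat.find_spec hex
  have hmin : ∀ i < j₀, g^[i] B ≠ r := fun i hi => Nat.find_min hex hi
  have h1 : (Function.update g r Bs)^[j₀] B = r := by
    rw [iterate_update_eq j₀ B hmin, hj₀]
  have h2 : (Function.update g r Bs)^[j₀ + 1] B = Bs := by
    rw [Function.iterate_succ_apply', h1, Function.update_self]
  obtain ⟨d, hd⟩ := htarget
  exact ⟨d + (j₀ + 1), by rw [Function.iterate_add_apply, h2, hd]⟩

/-- One surgery step: redirect a root `r` to some `Bs` not in `r`'s component. -/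
lemma stepArb {𝓑 roots : Finset (Finset V)} {g : Finset V → Finset V}
    (h : GoodArb 𝓑 roots g) {r Bs : Finset V} (hr : r ∈ roots) (hBs : Bs ∈ 𝓑)
    (hnr : ¬ RReach g Bs r) (hne : (roots.erase r).Nonempty) :
    GoodArb 𝓑 (roots.erase r) (Function.update g r Bs) ∧
    wArb 𝓑 (Function.update g r Bs) = wArb 𝓑 g + (Bs \ r).card ∧
    ∃ r₁ ∈ roots.erase r, RReach (Function.update g r Bs) Bs r₁ := by
  obtain ⟨hsub, -, hmap, hfix, hreach⟩ := h
  have hr𝓑 : r ∈ 𝓑 := hsub hr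
  -- Bs's root
  obtain ⟨r₀, hr₀, hBsr₀⟩ := hreach Bs hBs
  have hr₀r : r₀ ≠ r := fun h' => hnr (h' ▸ hBsr₀)
  have hr₀e : r₀ ∈ roots.erase r := Finset.mem_erase.2 ⟨hr₀r, hr₀⟩
  have hBsr₁ : RReach (Function.update g r Bs) Bs r₀ := rreach_update_of_not hnr hBsr₀
  refine ⟨⟨(Finset.erase_subset r roots).trans hsub, hne, ?_, ?_, ?_⟩, ?_, r₀, hr₀e, hBsr₁⟩
  · intro B hB
    by_cases hBr : B = r
    · rw [hBr, Function.update_self]; exact hBs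
    · rw [Function.update_of_ne hBr]; exact hmap B hB
  · intro r' hr'
    obtain ⟨hne', hr'r⟩ := Finset.mem_erase.1 hr'
    rw [Function.update_of_ne hne']
    exact hfix r' hr'r
  · intro B hB
    obtain ⟨rB, hrB, hreachB⟩ := hreach B hB
    by_cases hrBr : rB = r
    · subst hrBr
      exact ⟨r₀, hr₀e, rreach_update_through hreachB hBsr₁⟩
    · have hnBr : ¬ RReach g B r := fun hc =>
        hrBr (rreach_unique ⟨hsub, ⟨r, hr⟩, hmap, hfix, hreach⟩ hrB hr hreachB hc)
      exact ⟨rB, Finset.mem_erase.2 ⟨hrBr, hrB⟩, rreach_update_of_not hnBr hreachB⟩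
  · -- weight
    unfold wArb
    rw [← Finset.add_sum_erase 𝓑 (fun B => ((Function.update g r Bs) B \ B).card) hr𝓑,
      ← Finset.add_sum_erase 𝓑 (fun B => (g B \ B).card) hr𝓑]
    have h1 : ((Function.update g r Bs) r \ r).card = (Bs \ r).card := by
      rw [Function.update_self]
    have h2 : (g r \ r).card = 0 := by rw [hfix r hr]; simp
    have h3 : ∀ B ∈ 𝓑.erase r, ((Function.update g r Bs) B \ B).card = (g B \ B).card := by
      intro B hB
      rw [Function.update_of_ne (Finset.mem_erase.1 hB).1]
    rw [Finset.sum_congr rfl h3, h1, h2]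
    omega

/-- One level of the construction: process each root in `P`, halving the number
of roots, at total clause cost `≤ |Φ|`. -/
lemma levelArb {𝓑 : Finset (Finset V)} (Φ : Finset (Finset V × V))
    (hmem : ∀ c ∈ Φ, ∃ B ∈ 𝓑, B ⊆ c.1)
    (huniv : ∀ B ∈ 𝓑, hornClosure Φ ↑B = Set.univ) :
    ∀ (n : ℕ) (P : Finset (Finset V)), P.card ≤ n →
    ∀ (roots : Finset (Finset V)) (g : Finset V → Finset V)
      (Used : Finset (Finset V × V)),
    GoodArb 𝓑 roots g → P ⊆ roots → Used ⊆ Φ →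
    (∀ c ∈ Used, ∀ B ∈ 𝓑, B ⊆ c.1 → ∀ r ∈ P, ¬ RReach g B r) →
    ∃ roots' g', GoodArb 𝓑 roots' g' ∧ roots' ⊆ roots ∧
      (2 * roots'.card + P.card ≤ 2 * roots.card ∨ roots'.card = 1) ∧
      wArb 𝓑 g' + Used.card ≤ wArb 𝓑 g + Φ.card := by
  intro n
  induction n with
  | zero =>
    intro P hP roots g Used hGood _ hUsed _
    have : P = ∅ := Finset.card_eq_zero.1 (Nat.le_zero.1 hP)
    subst this
    exact ⟨roots, g, hGood, le_rfl, Or.inl (by simp), by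
      have := Finset.card_le_card hUsed; omega⟩
  | succ n ih =>
    intro P hP roots g Used hGood hPsub hUsed hinv
    rcases P.eq_empty_or_nonempty with rfl | ⟨r, hrP⟩
    · exact ⟨roots, g, hGood, le_rfl, Or.inl (by simp), by
        have := Finset.card_le_card hUsed; omega⟩
    by_cases hcard : roots.card ≤ 1
    · have h1 : roots.card = 1 := le_antisymm hcard (Finset.card_pos.2 hGood.2.1)
      exact ⟨roots, g, hGood, le_rfl, Or.inr h1, by
        have := Finset.card_le_card hUsed; omega⟩
    · push_neg at hcard
      have hrroots : r ∈ roots := hPsub hrP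
      have hr𝓑 : r ∈ 𝓑 := hGood.1 hrroots
      -- another root, witnessing a member not reaching r
      obtain ⟨r'', hr''roots, hr''ne⟩ := Finset.exists_mem_ne hcard r
      have hAwit : ∃ B ∈ 𝓑, ¬ RReach g B r := by
        refine ⟨r'', hGood.1 hr''roots, fun hc => ?_⟩
        exact hr''ne (rreach_unique hGood hr''roots hrroots
          ⟨0, rfl⟩ hc)
      obtain ⟨Bs, hBs𝓑, hBsnr, U, hUΦ, hUmem, -, hUcard⟩ :=
        reachLemma Φ hmem (fun B => RReach g B r) hAwit r (huniv r hr𝓑)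
          (Finset.univ \ r).card r le_rfl le_rfl (subset_hornClosure _ _)
      -- disjointness of U and Used
      have hdisj : Disjoint Used U := by
        rw [Finset.disjoint_left]
        intro c hcUsed hcU
        obtain ⟨B₀, hB₀, hB₀sub⟩ := hmem c (hUΦ hcU)
        exact hinv c hcUsed B₀ hB₀ hB₀sub r hrP (hUmem c hcU B₀ hB₀ hB₀sub)
      have hne' : (roots.erase r).Nonempty := by
        rw [← Finset.card_pos, Finset.card_erase_of_mem hrroots]; omega
      obtain ⟨hGood₁, hw₁, r₁, hr₁, hBsr₁⟩ := stepArb hGood hrroots hBs𝓑 hBsnr hne'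
      set g₁ := Function.update g r Bs with hg₁
      set P' := (P.erase r).erase r₁ with hP'
      have hP'card : P'.card ≤ n := by
        have h2 : (P.erase r).card = P.card - 1 := Finset.card_erase_of_mem hrP
        have h3 : P'.card ≤ (P.erase r).card := Finset.card_le_card (Finset.erase_subset _ _)
        omega
      have hP'sub : P' ⊆ roots.erase r :=
        (Finset.erase_subset _ _).trans (Finset.erase_subset_erase r hPsub)
      -- maintained invariant
      have hinv' : ∀ c ∈ Used ∪ U, ∀ B ∈ 𝓑, B ⊆ c.1 → ∀ r' ∈ P', ¬ RReach g₁ B r' := by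
        intro c hc B hB hBsub r' hr'P' hreach'
        have hr'roots : r' ∈ roots.erase r := hP'sub hr'P'
        rcases Finset.mem_union.1 hc with hcUsed | hcU
        · -- B did not reach any root of P under g; its g-walk avoids r
          have hnBr : ¬ RReach g B r := hinv c hcUsed B hB hBsub r hrP
          have : RReach g B r' := by
            obtain ⟨j, hj⟩ := hreach'
            exact ⟨j, by rwa [iterate_update_eq' hnBr j] at hj⟩
          exact hinv c hcUsed B hB hBsub r'
            ((Finset.erase_subset _ _).trans (Finset.erase_subset _ _) hr'P') this
        · -- B reached r under g, hence reaches r₁ under g₁; uniqueness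
          have hBr : RReach g B r := hUmem c hcU B hB hBsub
          have hBr₁ : RReach g₁ B r₁ := rreach_update_through hBr hBsr₁
          have : r' = r₁ := rreach_unique hGood₁ hr'roots hr₁ hreach' hBr₁
          exact (Finset.mem_erase.1 hr'P').1 this
      obtain ⟨roots', g', hGood', hsub', hdisj', hw'⟩ :=
        ih P' hP'card (roots.erase r) g₁ (Used ∪ U) hGood₁ hP'sub
          (Finset.union_subset hUsed hUΦ) hinv'
      refine ⟨roots', g', hGood', hsub'.trans (Finset.erase_subset _ _), ?_, ?_⟩
      · rcases hdisj' with h | h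
        · left
          have e1 : (roots.erase r).card = roots.card - 1 :=
            Finset.card_erase_of_mem hrroots
          have e2 : (P.erase r).card = P.card - 1 := Finset.card_erase_of_mem hrP
          have e3 : (P.erase r).card ≤ P'.card + 1 := by
            rw [hP']
            have := Finset.pred_card_le_card_erase (s := P.erase r) (a := r₁)
            omega
          omega
        · exact Or.inr h
      · have e4 : (Used ∪ U).card = Used.card + U.card :=
          Finset.card_union_of_disjoint hdisj
        rw [hw₁] at hw'
        omega

lemma levelsArb {𝓑 : Finset (Finset V)} (Φ : Finset (Finset V × V))
    (hmem : ∀ c ∈ Φ, ∃ B ∈ 𝓑, B ⊆ c.1)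
    (huniv : ∀ B ∈ 𝓑, hornClosure Φ ↑B = Set.univ) :
    ∀ (ℓ : ℕ) (roots : Finset (Finset V)) (g : Finset V → Finset V),
      GoodArb 𝓑 roots g →
    ∃ roots' g', GoodArb 𝓑 roots' g' ∧
      wArb 𝓑 g' ≤ wArb 𝓑 g + ℓ * Φ.card ∧
      roots'.card ≤ max 1 (roots.card / 2 ^ ℓ) := by
  intro ℓ
  induction ℓ with
  | zero =>
    intro roots g hGood
    exact ⟨roots, g, hGood, by omega, by simp [le_max_iff]⟩
  | succ ℓ ih =>
    intro roots g hGood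
    obtain ⟨roots₁, g₁, hGood₁, -, hdisj, hw₁⟩ :=
      levelArb Φ hmem huniv roots.card roots le_rfl roots g ∅ hGood le_rfl
        (Finset.empty_subset _) (by simp)
    simp only [Finset.card_empty, Nat.add_zero] at hw₁
    obtain ⟨roots', g', hGood', hw', hcard'⟩ := ih roots₁ g₁ hGood₁
    refine ⟨roots', g', hGood', by
      calc wArb 𝓑 g' ≤ wArb 𝓑 g₁ + ℓ * Φ.card := hw'
        _ ≤ wArb 𝓑 g + Φ.card + ℓ * Φ.card := by omega
        _ = wArb 𝓑 g + (ℓ + 1) * Φ.card := by ring, ?_⟩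
    rcases hdisj with h | h
    · have h1 : roots₁.card ≤ roots.card / 2 := by omega
      have h2 : roots₁.card / 2 ^ ℓ ≤ roots.card / 2 / 2 ^ ℓ :=
        Nat.div_le_div_right h1
      have h3 : roots.card / 2 / 2 ^ ℓ = roots.card / 2 ^ (ℓ + 1) := by
        rw [Nat.div_div_eq_div_mul, pow_succ, Nat.mul_comm]
      calc roots'.card ≤ max 1 (roots₁.card / 2 ^ ℓ) := hcard'
        _ ≤ max 1 (roots.card / 2 ^ (ℓ + 1)) := by
            rw [← h3]; exact max_le_max le_rfl h2
    · have : roots₁.card / 2 ^ ℓ ≤ 1 := by rw [h]; exact Nat.div_le_self _ _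
      calc roots'.card ≤ max 1 (roots₁.card / 2 ^ ℓ) := hcard'
        _ ≤ 1 := by omega
        _ ≤ max 1 (roots.card / 2 ^ (ℓ + 1)) := le_max_left _ _

lemma finalArb {𝓑 : Finset (Finset V)} {k : ℕ} (hk : ∀ B ∈ 𝓑, B.card ≤ k) :
    ∀ (n : ℕ) (roots : Finset (Finset V)) (g : Finset V → Finset V),
      roots.card ≤ n → GoodArb 𝓑 roots g →
    ∃ roots' g', GoodArb 𝓑 roots' g' ∧ roots'.card = 1 ∧
      wArb 𝓑 g' ≤ wArb 𝓑 g + (roots.card - 1) * k := by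
  intro n
  induction n with
  | zero =>
    intro roots g hn hGood
    exact absurd (Finset.card_pos.2 hGood.2.1) (by omega)
  | succ n ih =>
    intro roots g hn hGood
    by_cases hcard : roots.card ≤ 1
    · exact ⟨roots, g, hGood, le_antisymm hcard (Finset.card_pos.2 hGood.2.1), by omega⟩
    · push_neg at hcard
      obtain ⟨r, hr, r', hr', hne⟩ := Finset.one_lt_card.1 hcard
      have hr'𝓑 : r' ∈ 𝓑 := hGood.1 hr'
      have hnr : ¬ RReach g r' r := by
        rintro ⟨j, hj⟩
        rw [Function.iterate_fixed (hGood.2.2.2.1 r' hr') j] at hj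
        exact hne.symm hj
      have hne' : (roots.erase r).Nonempty := ⟨r', Finset.mem_erase.2 ⟨hne.symm, hr'⟩⟩
      obtain ⟨hGood₁, hw₁, -⟩ := stepArb hGood hr hr'𝓑 hnr hne'
      have hcarde : (roots.erase r).card = roots.card - 1 := Finset.card_erase_of_mem hr
      obtain ⟨roots', g', hGood', hcard', hw'⟩ :=
        ih (roots.erase r) (Function.update g r r') (by omega) hGood₁
      refine ⟨roots', g', hGood', hcard', ?_⟩
      have hwk : (r' \ r).card ≤ k := le_trans (Finset.card_le_card Finset.sdiff_subset)
        (hk r' hr'𝓑)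
      have : (roots.card - 1 - 1) * k + k = (roots.card - 1) * k := by
        have h2 : roots.card - 1 - 1 + 1 = roots.card - 1 := by omega
        calc (roots.card - 1 - 1) * k + k = (roots.card - 1 - 1 + 1) * k := by ring
          _ = (roots.card - 1) * k := by rw [h2]
      rw [hcarde] at hw'
      omega

/-- If `T` is a minimum-weight spanning in-arborescence of the body graph
with arc weights `w(B,B') = |B' \ B|` (encoded by a root `R ∈ 𝓑` and a parent
map `f`), then `|Φ_T|_C ≤ ⌈log₂ k⌉ · OPT_C(𝓑) + max{0, m - k}`. -/
theorem stmt7 {V : Type*} [Fintype V] [DecidableEq V]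
    (𝓑 : Finset (Finset V))
    (hne : ∀ B ∈ 𝓑, B.Nonempty) (hproper : ∀ B ∈ 𝓑, B ≠ Finset.univ)
    (hsperner : ∀ B ∈ 𝓑, ∀ B' ∈ 𝓑, B ⊆ B' → B = B')
    (hcover : ∀ v : V, ∃ B ∈ 𝓑, v ∈ B)
    (hinter : ∀ v : V, ∃ B ∈ 𝓑, v ∉ B)
    (k m : ℕ) (hk1 : 1 ≤ k) (hk : ∀ B ∈ 𝓑, B.card ≤ k) (hm : 𝓑.card = m)
    (R : Finset V) (hR : R ∈ 𝓑) (f : Finset V → Finset V)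
    (hf : ∀ B ∈ 𝓑, B ≠ R → f B ∈ 𝓑)
    (hreach : ∀ B ∈ 𝓑, ∃ j : ℕ, f^[j] B = R)
    (hminwt : ∀ R' ∈ 𝓑, ∀ g : Finset V → Finset V,
      (∀ B ∈ 𝓑, B ≠ R' → g B ∈ 𝓑) → (∀ B ∈ 𝓑, ∃ j : ℕ, g^[j] B = R') →
      ∑ B ∈ 𝓑.erase R, (f B \ B).card ≤ ∑ B ∈ 𝓑.erase R', (g B \ B).card)
    (Φ : Finset (Finset V × V))
    (hΦ : Φ = (𝓑.erase R).biUnion fun B => (f B \ B).image fun v => (B, v)) :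
    sizeC Φ ≤ Nat.clog 2 k * OPT sizeC 𝓑 + (m - k) := by
  classical
  -- An optimal representation exists
  have hSne : {s : ℕ | ∃ Ψ : Finset (Finset V × V), Represents 𝓑 Ψ ∧ sizeC Ψ = s}.Nonempty := by
    refine ⟨sizeC (keyCNF 𝓑), keyCNF 𝓑, ⟨?_, fun Z => rfl⟩, rfl⟩
    intro c hc
    obtain ⟨B, hB, h1, h2⟩ := mem_keyCNF.1 hc
    exact ⟨h1 ▸ hne B hB, h1 ▸ h2⟩
  obtain ⟨Ψ, hrep, hΨopt⟩ := Nat.sInf_mem hSne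
  -- facts about Ψ
  have hmem : ∀ c ∈ Ψ, ∃ B ∈ 𝓑, B ⊆ c.1 := fun c hc => rep_body_mem hrep hc
  have huniv : ∀ B ∈ 𝓑, hornClosure Ψ ↑B = Set.univ := fun B hB => rep_closure_univ hrep hB
  -- initial state
  have hGood0 : GoodArb 𝓑 𝓑 id :=
    ⟨le_rfl, ⟨R, hR⟩, fun B hB => hB, fun r _ => rfl, fun B hB => ⟨B, hB, 0, rfl⟩⟩
  have hw0 : wArb 𝓑 id = 0 := by
    unfold wArb; simp
  set L := Nat.clog 2 k with hL
  obtain ⟨roots₁, g₁, hGood₁, hw₁, hcard₁⟩ := levelsArb Ψ hmem huniv L 𝓑 id hGood0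
  rw [hw0, Nat.zero_add] at hw₁
  obtain ⟨roots₂, g₂, hGood₂, hcard₂, hw₂⟩ :=
    finalArb hk roots₁.card roots₁ g₁ le_rfl hGood₁
  -- the extra cost of the final phase
  have hfin : (roots₁.card - 1) * k ≤ m - k := by
    rcases le_or_gt roots₁.card 1 with h | h
    · have : roots₁.card - 1 = 0 := by omega
      rw [this]; simp
    · -- roots₁.card ≥ 2, hence 𝓑.card / 2^L ≥ roots₁.card
      have hq : roots₁.card ≤ 𝓑.card / 2 ^ L := by
        rcases max_choice 1 (𝓑.card / 2 ^ L) with hmax | hmax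
        · omega
        · omega
      set q := 𝓑.card / 2 ^ L with hqdef
      have hk2L : k ≤ 2 ^ L := Nat.le_pow_clog (by norm_num) k
      have hqm : q * 2 ^ L ≤ 𝓑.card := Nat.div_mul_le_self _ _
      have hqk : q * k ≤ m := by
        calc q * k ≤ q * 2 ^ L := Nat.mul_le_mul_left q hk2L
          _ ≤ 𝓑.card := hqm
          _ = m := hm
      have hkm : k ≤ m := by
        have h1 : 1 * k ≤ q * k := Nat.mul_le_mul_right k (by omega)
        omega
      have h2 : (roots₁.card - 1) * k ≤ (q - 1) * k :=
        Nat.mul_le_mul_right k (by omega)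
      have h3 : (q - 1) * k + k = q * k := by
        have : q - 1 + 1 = q := by omega
        calc (q - 1) * k + k = (q - 1 + 1) * k := (Nat.succ_mul _ _).symm
          _ = q * k := by rw [this]
      omega
  -- extract the single root
  obtain ⟨R', hroots₂⟩ := Finset.card_eq_one.1 hcard₂
  have hR'𝓑 : R' ∈ 𝓑 := hGood₂.1 (hroots₂ ▸ Finset.mem_singleton_self R')
  have hg₂map : ∀ B ∈ 𝓑, B ≠ R' → g₂ B ∈ 𝓑 := fun B hB _ => hGood₂.2.2.1 B hB
  have hg₂reach : ∀ B ∈ 𝓑, ∃ j : ℕ, g₂^[j] B = R' := by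
    intro B hB
    obtain ⟨r, hr, j, hj⟩ := hGood₂.2.2.2.2 B hB
    rw [hroots₂, Finset.mem_singleton] at hr
    exact ⟨j, hr ▸ hj⟩
  -- the minimality hypothesis
  have hmin := hminwt R' hR'𝓑 g₂ hg₂map hg₂reach
  -- bound the right-hand side through wArb
  have hsum : ∑ B ∈ 𝓑.erase R', (g₂ B \ B).card ≤ wArb 𝓑 g₂ :=
    Finset.sum_le_sum_of_subset (Finset.erase_subset _ _)
  -- compute sizeC Φ
  have hsC : sizeC Φ = ∑ B ∈ 𝓑.erase R, (f B \ B).card := by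
    rw [sizeC, hΦ, Finset.card_biUnion]
    · refine Finset.sum_congr rfl fun B _ => ?_
      have hinj : Function.Injective (fun v : V => (B, v)) := by
        intro a b hab; simpa using hab
      rw [Finset.card_image_of_injective _ hinj]
    · intro x hx y hy hxy
      rw [Function.onFun, Finset.disjoint_left]
      intro a ha hay
      obtain ⟨v, -, rfl⟩ := Finset.mem_image.1 ha
      obtain ⟨v', -, hv'⟩ := Finset.mem_image.1 hay
      have hyx : y = x := by simpa using congrArg Prod.fst hv'
      exact hxy hyx.symm
  calc sizeC Φ = ∑ B ∈ 𝓑.erase R, (f B \ B).card := hsC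
    _ ≤ ∑ B ∈ 𝓑.erase R', (g₂ B \ B).card := hmin
    _ ≤ wArb 𝓑 g₂ := hsum
    _ ≤ L * Ψ.card + (roots₁.card - 1) * k := by omega
    _ ≤ Nat.clog 2 k * OPT sizeC 𝓑 + (m - k) := by
        have hΨ : Ψ.card = OPT sizeC 𝓑 := hΨopt
        rw [hΨ, hL]
        omega
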